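/- (Example 5.9(2), inequality between the distances on the annulus.) Fix a real number r with 0 < r < 2^{1/3} − 1 and let A(r) := {z ∈ ℂ : r < |z| < 1}. Define d_{a(r)}(z,w) := max{ d_𝔻(z,w), d_𝔻(r/z, r/w) } for z, w ∈ A(r). Then d_{a(r)}(√r, −√r) = 2√r/(1+r), and d_{a(r)}(√r, −√r) < d_{A(r)}(√r, −√r), where d_{A(r)} is the Möbius pseudo-distance of the domain A(r). In particular d_{a(r)} does not coincide with d_{A(r)}. -/

import Mathlib

open scoped Matrix.Norms.L2Operator ComplexOrder
open Matrix

noncomputable section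

open scoped Classical in
/-- Square root of a positive semidefinite matrix (junk value `0` otherwise). -/
def msqrt {n' : Type*} [Fintype n'] [DecidableEq n'] (M : Matrix n' n' ℂ) : Matrix n' n' ℂ :=
  if h : M.PosSemidef then
    h.1.eigenvectorUnitary.1 * diagonal ((↑) ∘ Real.sqrt ∘ h.1.eigenvalues) *
      (star h.1.eigenvectorUnitary : Matrix n' n' ℂ)
  else 0

/-- The pseudo-distance `d_Δ`. -/
def dDelta {α m' n' : Type*} [Fintype m'] [Fintype n'] [DecidableEq m'] [DecidableEq n']
    (Δ : α → Matrix m' n' ℂ) (z w : α) : ℝ :=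
  ‖(msqrt (1 - Δ w * (Δ w)ᴴ))⁻¹ * ((Δ z - Δ w) *
      ((1 - (Δ w)ᴴ * Δ z)⁻¹ * msqrt (1 - (Δ w)ᴴ * Δ w)))‖

/-- `B_Δ = {z ∈ E : ‖Δ(z)‖ < 1}`. -/
def BDelta {α m' n' : Type*} [Fintype m'] [Fintype n'] [DecidableEq n'] (E : Set α)
    (Δ : α → Matrix m' n' ℂ) : Set α :=
  {z | z ∈ E ∧ ‖Δ z‖ < 1}

/-- pseudo-hyperbolic distance on the unit disk -/
def dDisk (a b : ℂ) : ℝ := ‖a - b‖ / ‖1 - (starRingEnd ℂ) b * a‖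

/-- elementary tensor `ξ ⊗ v` in `ℂ^m ⊗ ℂ^2`, realized as a function on `m × Fin 2` -/
def tpr {m' : Type*} (ξ : m' → ℂ) (v : Fin 2 → ℂ) : m' × Fin 2 → ℂ :=
  fun p => ξ p.1 * v p.2

/-- inner product, conjugate-linear in the second variable -/
def herm {m' : Type*} [Fintype m'] (ξ η : m' → ℂ) : ℂ :=
  ∑ p, ξ p * (starRingEnd ℂ) (η p)

/-- positive semidefiniteness of a `2 × 2` kernel `(a i j)` -/
def PSD2 (a : Fin 2 → Fin 2 → ℂ) : Prop :=
  ∀ c : Fin 2 → ℂ, 0 ≤ ∑ i, ∑ j, a i j * c i * (starRingEnd ℂ) (c j)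

/-- `T` is a generic tuple with joint eigenvectors `v` and joint eigenvalues `z 0 ≠ z 1`. -/
def IsGenericTuple {d : ℕ} (T : Fin d → Matrix (Fin 2) (Fin 2) ℂ)
    (v : Fin 2 → Fin 2 → ℂ) (z : Fin 2 → Fin d → ℂ) : Prop :=
  LinearIndependent ℂ v ∧ z 0 ≠ z 1 ∧ ∀ i j, T i *ᵥ v j = z j i • v j

/-- `‖Δ(T)‖ ≤ 1`, where `Δ(T)` is the matrix on `ℂ^s ⊗ ℂ^2` determined by
`Δ(T)(e_i ⊗ v_j) = (Δ(z_j) e_i) ⊗ v_j`. -/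
def DeltaTContract {β : Type*} {s r : ℕ} (Δ : β → Matrix (Fin s) (Fin r) ℂ)
    (v : Fin 2 → Fin 2 → ℂ) (z : Fin 2 → β) : Prop :=
  ∀ DT : Matrix (Fin s × Fin 2) (Fin r × Fin 2) ℂ,
    (∀ (i : Fin r) (j : Fin 2),
      DT *ᵥ tpr (Pi.single i 1) (v j) = tpr (Δ (z j) *ᵥ Pi.single i 1) (v j)) →
    ‖DT‖ ≤ 1

/-- membership in the class `S_{2,gen}(B_Δ)` -/
def MemS2gen {d s r : ℕ} (E : Set (Fin d → ℂ)) (Δ : (Fin d → ℂ) → Matrix (Fin s) (Fin r) ℂ)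
    (f : (Fin d → ℂ) → ℂ) : Prop :=
  ∀ (T : Fin d → Matrix (Fin 2) (Fin 2) ℂ) (v : Fin 2 → Fin 2 → ℂ) (z : Fin 2 → Fin d → ℂ),
    IsGenericTuple T v z → (∀ j, z j ∈ BDelta E Δ) → DeltaTContract Δ v z →
    ∀ fT : Matrix (Fin 2) (Fin 2) ℂ, (∀ j, fT *ᵥ v j = f (z j) • v j) → ‖fT‖ ≤ 1

/-- the Möbius pseudo-distance of a domain `Ω` -/
def dMobius {α : Type*} [NormedAddCommGroup α] [NormedSpace ℂ α] (Ω : Set α) (z w : α) : ℝ :=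
  sSup {x | ∃ g : α → ℂ, DifferentiableOn ℂ g Ω ∧ (∀ ζ ∈ Ω, ‖g ζ‖ < 1) ∧ x = dDisk (g z) (g w)}

/-- `Ω` is a complete spectral domain for the diagonalizable tuple with eigenvectors `v` and
joint eigenvalues `z 0, z 1`. -/
def IsCompleteSpectralDomainFor {α : Type*} [NormedAddCommGroup α] [NormedSpace ℂ α]
    (Ω : Set α) (v : Fin 2 → Fin 2 → ℂ) (z : Fin 2 → α) : Prop :=
  ∀ (n : ℕ) (F : α → Matrix (Fin n) (Fin n) ℂ),
    (∀ i j, DifferentiableOn ℂ (fun ζ => F ζ i j) Ω) →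
    ∀ C : ℝ, (∀ ζ ∈ Ω, ‖F ζ‖ ≤ C) →
    ∀ FT : Matrix (Fin n × Fin 2) (Fin n × Fin 2) ℂ,
      (∀ (ξ : Fin n → ℂ) (j : Fin 2), FT *ᵥ tpr ξ (v j) = tpr (F (z j) *ᵥ ξ) (v j)) →
      ‖FT‖ ≤ C

/-- the annulus `A(r) = {ζ : r < |ζ| < 1}` -/
def annulus (r : ℝ) : Set ℂ := {ζ : ℂ | r < ‖ζ‖ ∧ ‖ζ‖ < 1}

/-- the pseudo-distance `d_{a(r)}` of the annulus, coming from `a(r)(ζ) = diag(ζ, r/ζ)` -/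
def dAnn (r : ℝ) (z w : ℂ) : ℝ := max (dDisk z w) (dDisk ((r : ℂ) / z) ((r : ℂ) / w))

lemma dDisk_real (u : ℝ) (hu : 0 ≤ u) :
    dDisk (u : ℂ) (-(u : ℂ)) = 2 * u / (1 + u ^ 2) := by
  unfold dDisk
  have h1 : (u : ℂ) - (-(u : ℂ)) = ((2 * u : ℝ) : ℂ) := by push_cast; ring
  have h2 : (1 : ℂ) - (starRingEnd ℂ) (-(u : ℂ)) * (u : ℂ) = ((1 + u ^ 2 : ℝ) : ℂ) := by
    simp [map_neg, Complex.conj_ofReal]; push_cast; ring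
  rw [h1, h2, Complex.norm_real, Complex.norm_real, Real.norm_eq_abs, Real.norm_eq_abs,
    abs_of_nonneg (by positivity), abs_of_nonneg (by positivity)]

lemma dDisk_lt_one (a b : ℂ) (ha : ‖a‖ < 1) (hb : ‖b‖ < 1) : dDisk a b < 1 := by
  have key : Complex.normSq (1 - (starRingEnd ℂ) b * a) - Complex.normSq (a - b) =
      (1 - Complex.normSq a) * (1 - Complex.normSq b) := by
    simp only [Complex.normSq_apply, Complex.sub_re, Complex.sub_im, Complex.mul_re,
      Complex.mul_im, Complex.one_re, Complex.one_im, Complex.conj_re, Complex.conj_im]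
    ring
  have hna : Complex.normSq a = ‖a‖ ^ 2 := by
    rw [Complex.normSq_eq_norm_sq]
  have hnb : Complex.normSq b = ‖b‖ ^ 2 := by
    rw [Complex.normSq_eq_norm_sq]
  have hnc : Complex.normSq (1 - (starRingEnd ℂ) b * a) = ‖1 - (starRingEnd ℂ) b * a‖ ^ 2 := by
    rw [Complex.normSq_eq_norm_sq]
  have hnd : Complex.normSq (a - b) = ‖a - b‖ ^ 2 := by
    rw [Complex.normSq_eq_norm_sq]
  have ha' : 0 ≤ ‖a‖ := norm_nonneg _
  have hb' : 0 ≤ ‖b‖ := norm_nonneg _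
  have hsq : ‖a - b‖ ^ 2 < ‖1 - (starRingEnd ℂ) b * a‖ ^ 2 := by
    rw [hna, hnb, hnc, hnd] at key
    have hpos2 : 0 < (1 - ‖a‖ ^ 2) * (1 - ‖b‖ ^ 2) :=
      mul_pos (by nlinarith) (by nlinarith)
    linarith
  have hlt : ‖a - b‖ < ‖1 - (starRingEnd ℂ) b * a‖ :=
    lt_of_pow_lt_pow_left₀ 2 (norm_nonneg _) hsq
  have hpos : 0 < ‖1 - (starRingEnd ℂ) b * a‖ := lt_of_le_of_lt (norm_nonneg _) hlt
  rw [dDisk, div_lt_one hpos]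
  exact hlt

/-- **Example 5.9(2)**: for `0 < r < 2^{1/3} − 1`, the pseudo-distance `d_{a(r)}` is strictly
smaller than the Möbius pseudo-distance of the annulus at the points `±√r`. -/
theorem dAnn_lt_dMobius_annulus (r : ℝ) (hr0 : 0 < r)
    (hr1 : r < (2 : ℝ) ^ ((1 : ℝ) / 3) - 1) :
    dAnn r (Real.sqrt r : ℂ) (-(Real.sqrt r : ℂ)) = 2 * Real.sqrt r / (1 + r) ∧
    dAnn r (Real.sqrt r : ℂ) (-(Real.sqrt r : ℂ)) <
      dMobius (annulus r) (Real.sqrt r : ℂ) (-(Real.sqrt r : ℂ)) := by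
  have hr1' : r < 1 := by
    have h2 : (2 : ℝ) ^ ((1 : ℝ) / 3) ≤ 2 := by
      nth_rewrite 2 [show (2 : ℝ) = 2 ^ (1 : ℝ) by rw [Real.rpow_one]]
      exact Real.rpow_le_rpow_left_iff (by norm_num) |>.mpr (by norm_num)
    linarith
  set s := Real.sqrt r with hs_def
  have hs0 : 0 < s := Real.sqrt_pos.mpr hr0
  have hs1 : s < 1 := by
    rw [hs_def, show (1 : ℝ) = Real.sqrt 1 by simp]
    exact Real.sqrt_lt_sqrt hr0.le hr1'
  have hsr : s ^ 2 = r := Real.sq_sqrt hr0.le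
  have hsC : (s : ℂ) ≠ 0 := by exact_mod_cast hs0.ne'
  -- r / s = s and r / (-s) = -s as complex numbers
  have hrs : (r : ℂ) / (s : ℂ) = (s : ℂ) := by
    rw [← hsr]; push_cast; rw [sq, mul_div_assoc, div_self hsC, mul_one]
  have hrns : (r : ℂ) / (-(s : ℂ)) = -(s : ℂ) := by rw [div_neg, hrs]
  -- value of dAnn
  have hdd : dDisk (s : ℂ) (-(s : ℂ)) = 2 * s / (1 + r) := by
    rw [dDisk_real s hs0.le, hsr]
  have hAnn : dAnn r (s : ℂ) (-(s : ℂ)) = 2 * s / (1 + r) := by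
    rw [dAnn, hrs, hrns, max_self, hdd]
  refine ⟨hAnn, ?_⟩
  rw [hAnn]
  -- the function g
  set g : ℂ → ℂ := fun z => (z + (r : ℂ) / z) / ((1 + r : ℝ) : ℂ) with hg_def
  have hr1pos : (0 : ℝ) < 1 + r := by linarith
  have hne : ∀ ζ ∈ annulus r, ζ ≠ 0 := by
    intro ζ hζ h0
    rw [h0] at hζ
    simp [annulus] at hζ
    linarith
  have hdiff : DifferentiableOn ℂ g (annulus r) := by
    apply DifferentiableOn.div_const
    exact differentiableOn_id.add
      ((differentiableOn_const _).div differentiableOn_id hne)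
  have hbound : ∀ ζ ∈ annulus r, ‖g ζ‖ < 1 := by
    intro ζ hζ
    obtain ⟨h1, h2⟩ := hζ
    have hζ0 : (0 : ℝ) < ‖ζ‖ := lt_trans hr0 h1
    have : ‖g ζ‖ = ‖ζ + (r : ℂ) / ζ‖ / (1 + r) := by
      rw [hg_def]
      simp only [norm_div, Complex.norm_real, Real.norm_eq_abs, abs_of_pos hr1pos]
    rw [this, div_lt_one hr1pos]
    calc ‖ζ + (r : ℂ) / ζ‖ ≤ ‖ζ‖ + ‖(r : ℂ)‖ / ‖ζ‖ := by
          rw [← norm_div]; exact norm_add_le _ _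
      _ = ‖ζ‖ + r / ‖ζ‖ := by rw [Complex.norm_real, Real.norm_eq_abs, abs_of_pos hr0]
      _ < 1 + r := by
          rw [show ‖ζ‖ + r / ‖ζ‖ < 1 + r ↔ r / ‖ζ‖ < 1 + r - ‖ζ‖ from
            ⟨fun h => by linarith, fun h => by linarith⟩, div_lt_iff₀ hζ0]
          nlinarith
  -- membership of the points in the annulus
  have hmem : (s : ℂ) ∈ annulus r := by
    constructor
    · rw [Complex.norm_real, Real.norm_eq_abs, abs_of_pos hs0]
      nlinarith
    · rw [Complex.norm_real, Real.norm_eq_abs, abs_of_pos hs0]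
      exact hs1
  have hmem' : (-(s : ℂ)) ∈ annulus r := by
    rw [annulus, Set.mem_setOf_eq, norm_neg]
    exact hmem
  -- values of g at ±s
  set t : ℝ := 2 * s / (1 + r) with ht_def
  have ht0 : 0 < t := by positivity
  have ht1 : t < 1 := by
    rw [ht_def, div_lt_one hr1pos]
    nlinarith
  have hgs : g (s : ℂ) = (t : ℂ) := by
    rw [hg_def]
    simp only
    rw [hrs, ht_def]
    push_cast
    field_simp
    ring
  have hgns : g (-(s : ℂ)) = -(t : ℂ) := by
    rw [hg_def]
    simp only
    rw [hrns, ht_def]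
    push_cast
    field_simp
    ring
  -- the candidate value
  have hval : dDisk (g (s : ℂ)) (g (-(s : ℂ))) = 2 * t / (1 + t ^ 2) := by
    rw [hgs, hgns, dDisk_real t ht0.le]
  have hSmem : dDisk (g (s : ℂ)) (g (-(s : ℂ))) ∈
      {x | ∃ g' : ℂ → ℂ, DifferentiableOn ℂ g' (annulus r) ∧
        (∀ ζ ∈ annulus r, ‖g' ζ‖ < 1) ∧ x = dDisk (g' (s : ℂ)) (g' (-(s : ℂ)))} :=
    ⟨g, hdiff, hbound, rfl⟩
  have hbdd : BddAbove {x | ∃ g' : ℂ → ℂ, DifferentiableOn ℂ g' (annulus r) ∧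
      (∀ ζ ∈ annulus r, ‖g' ζ‖ < 1) ∧ x = dDisk (g' (s : ℂ)) (g' (-(s : ℂ)))} := by
    refine ⟨1, fun x hx => ?_⟩
    obtain ⟨g', _, hg'lt, rfl⟩ := hx
    exact (dDisk_lt_one _ _ (hg'lt _ hmem) (hg'lt _ hmem')).le
  have hle : dDisk (g (s : ℂ)) (g (-(s : ℂ))) ≤
      dMobius (annulus r) (s : ℂ) (-(s : ℂ)) := le_csSup hbdd hSmem
  have hstrict : 2 * s / (1 + r) < dDisk (g (s : ℂ)) (g (-(s : ℂ))) := by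
    rw [hval]
    have : 2 * s / (1 + r) = t := rfl
    rw [this, lt_div_iff₀ (by positivity)]
    nlinarith
  exact lt_of_lt_of_le hstrict hle
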